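/- In the Grigorchuk group 𝔾 = ⟨a,b,c,d⟩, define t_0 = abab. Then t_0^2 ≠ 1, and for every m ≥ 0 there exists t_m ∈ 𝔾 of the form t_m = ∏_{i=1}^{2^m} (a b a x_i) with each x_i ∈ {b,c,d}, such that t_m^2 is a nontrivial element of the rigid stabilizer Rist(1^m) ∩ 𝔾 and t_m restricted to the subtree at 1^m equals t_0; in particular, Rist_𝔾(1^m) contains a nontrivial element of word length at most 2^{m+4} with respect to (a,b,c). -/
import Mathlib


/-- The automorphism `a` of the rooted binary tree `{0,1}*` flipping the first bit. -/
def aFun : List Bool → List Bool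
  | [] => []
  | x :: s => (!x) :: s

lemma aFun_invol : Function.Involutive aFun := by
  intro s; cases s <;> simp [aFun]

def aPerm : Equiv.Perm (List Bool) := aFun_invol.toPerm

/-- The alphabet `{b, c, d}` of defining strings of generalized Grigorchuk groups. -/
inductive GLetter : Type
  | b | c | d
deriving DecidableEq

/-- The action of the generator `x_n` of `𝔾_ω`: it fixes `1^m` and sends
`1^m 0 s` to itself if `ω_{n+m} = x`, and to `1^m 0 a(s)` otherwise. -/
def xFun (ω : ℕ → GLetter) (x : GLetter) : ℕ → List Bool → List Bool
  | _, [] => []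
  | n, true :: s => true :: xFun ω x (n + 1) s
  | n, false :: s => false :: (if ω n = x then s else aFun s)

lemma xFun_invol (ω : ℕ → GLetter) (x : GLetter) (n : ℕ) :
    Function.Involutive (xFun ω x n) := by
  intro s
  induction s generalizing n with
  | nil => rfl
  | cons hd t ih =>
    cases hd
    · by_cases h : ω n = x <;> simp [xFun, h, aFun_invol t]
    · simp [xFun, ih]

def xPerm (ω : ℕ → GLetter) (x : GLetter) (n : ℕ) : Equiv.Perm (List Bool) :=
  (xFun_invol ω x n).toPerm

/-- The generalized Grigorchuk group `𝔾_ω = ⟨a, b₀, c₀, d₀⟩`. -/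
def Grig (ω : ℕ → GLetter) : Subgroup (Equiv.Perm (List Bool)) :=
  Subgroup.closure {aPerm, xPerm ω GLetter.b 0, xPerm ω GLetter.c 0, xPerm ω GLetter.d 0}

/-- The defining string `ω = dcbdcbdcb…` of the (first) Grigorchuk group. -/
def grigω : ℕ → GLetter := fun n =>
  if n % 3 = 0 then GLetter.d else if n % 3 = 1 then GLetter.c else GLetter.b

/-- The generators `a, b, c, d` of the Grigorchuk group `𝔾`. -/
def ga : Equiv.Perm (List Bool) := aPerm
def gb : Equiv.Perm (List Bool) := xPerm grigω GLetter.b 0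
def gc : Equiv.Perm (List Bool) := xPerm grigω GLetter.c 0
def gd : Equiv.Perm (List Bool) := xPerm grigω GLetter.d 0

-- ===== auxiliary development =====
open GLetter

lemma ga_apply (s : List Bool) : ga s = aFun s := rfl
lemma xPerm_apply (ω x n) (s : List Bool) : xPerm ω x n s = xFun ω x n s := rfl

def sig : GLetter → GLetter
  | b => c | c => d | d => b

def tau : GLetter → GLetter
  | b => d | c => b | d => c

lemma sig_tau (y : GLetter) : sig (tau y) = y := by cases y <;> rfl

lemma grig_shift (n : ℕ) (x : GLetter) : (grigω (n+1) = x) ↔ (grigω n = sig x) := by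
  have h : n % 3 = 0 ∨ n % 3 = 1 ∨ n % 3 = 2 := by omega
  have h1 : (n+1) % 3 = (n % 3 + 1) % 3 := by omega
  rcases h with h|h|h <;> rw [grigω, grigω] <;> simp only [h1, h] <;> cases x <;> simp [sig]

lemma xFun_shift (s : List Bool) : ∀ (n : ℕ) (x : GLetter),
    xFun grigω x (n+1) s = xFun grigω (sig x) n s := by
  induction s with
  | nil => intro n x; rfl
  | cons hd t ih =>
    intro n x
    cases hd
    · show (false :: if grigω (n+1) = x then t else aFun t) =
          (false :: if grigω n = sig x then t else aFun t)
      by_cases h : grigω (n+1) = x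
      · rw [if_pos h, if_pos ((grig_shift n x).mp h)]
      · rw [if_neg h, if_neg (fun hc => h ((grig_shift n x).mpr hc))]
    · show true :: xFun grigω x (n+2) t = true :: xFun grigω (sig x) (n+1) t
      rw [ih (n+1) x]

lemma grig0 : grigω 0 = GLetter.d := rfl

def blk (y : GLetter) : Equiv.Perm (List Bool) := ga * gb * ga * xPerm grigω y 0

lemma blk_apply (y : GLetter) (u : List Bool) :
    blk y u = aFun (xFun grigω GLetter.b 0 (aFun (xFun grigω y 0 u))) := rfl

lemma blk_true (y : GLetter) (s : List Bool) :
    blk y (true :: s) = true :: aFun (xFun grigω (sig y) 0 s) := by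
  rw [blk_apply]
  show aFun (xFun grigω GLetter.b 0 (aFun (true :: xFun grigω y 1 s))) = _
  show aFun (xFun grigω GLetter.b 0 (false :: xFun grigω y 1 s)) = _
  rw [xFun]
  have : grigω 0 ≠ GLetter.b := by decide
  rw [if_neg this]
  show true :: aFun (xFun grigω y 1 s) = _
  rw [xFun_shift]

lemma blk_false (y : GLetter) (s : List Bool) :
    blk y (false :: s) =
      false :: xFun grigω GLetter.c 0 (if GLetter.d = y then s else aFun s) := by
  rw [blk_apply]
  show aFun (xFun grigω GLetter.b 0 (aFun (false :: if grigω 0 = y then s else aFun s))) = _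
  rw [grig0]
  show aFun (xFun grigω GLetter.b 0 (true :: (if GLetter.d = y then s else aFun s))) = _
  rw [xFun]
  show aFun (true :: xFun grigω GLetter.b 1 (if GLetter.d = y then s else aFun s)) = _
  rw [xFun_shift]
  rfl

def wrd : ℕ → List GLetter
  | 0 => [GLetter.b]
  | m+1 => (wrd m).flatMap (fun y => [GLetter.d, tau y])

def tmP (m : ℕ) : Equiv.Perm (List Bool) := ((wrd m).map blk).prod

lemma t0_eq : tmP 0 = ga * gb * ga * gb := by
  show ([blk GLetter.b]).prod = _
  simp [blk, gb]

def cnt : List GLetter → ℕ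
  | [] => 0
  | y :: L => (if y = GLetter.b then 0 else 1) + cnt L

lemma prodT (L : List GLetter) (s : List Bool) :
    (((L.flatMap fun y => [GLetter.d, tau y]).map blk).prod) (true :: s)
      = true :: ((L.map blk).prod) s := by
  induction L generalizing s with
  | nil => rfl
  | cons y L ih =>
    rw [List.flatMap_cons]
    show ((blk GLetter.d :: blk (tau y) :: ((L.flatMap fun y => [GLetter.d, tau y]).map blk)).prod) (true :: s) = _
    rw [List.prod_cons, List.prod_cons, Equiv.Perm.mul_apply, Equiv.Perm.mul_apply, ih,
      blk_true, blk_true, sig_tau]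
    show true :: aFun (xFun grigω (sig GLetter.d) 0 (aFun (xFun grigω y 0 (((L.map blk).prod) s)))) = _
    rw [List.map_cons, List.prod_cons, Equiv.Perm.mul_apply, blk_apply]
    rfl

lemma aPerm_sq_apply (k : ℕ) (s : List Bool) : (aPerm ^ k) ((aPerm ^ k) s) = s := by
  rw [← Equiv.Perm.mul_apply, ← pow_add]
  have h2 : aPerm ^ 2 = 1 := by
    ext u; simp [aPerm, Equiv.Perm.mul_apply, pow_two, aFun_invol u]
  have : aPerm ^ (k + k) = 1 := by
    rw [show k + k = 2 * k by ring, pow_mul, h2, one_pow]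
  rw [this]; rfl

lemma prodF (L : List GLetter) (s : List Bool) :
    (((L.flatMap fun y => [GLetter.d, tau y]).map blk).prod) (false :: s)
      = false :: (aPerm ^ cnt L) s := by
  induction L generalizing s with
  | nil => rfl
  | cons y L ih =>
    rw [List.flatMap_cons]
    show ((blk GLetter.d :: blk (tau y) :: ((L.flatMap fun y => [GLetter.d, tau y]).map blk)).prod) (false :: s) = _
    rw [List.prod_cons, List.prod_cons, Equiv.Perm.mul_apply, Equiv.Perm.mul_apply, ih,
      blk_false, blk_false, if_pos rfl]
    rw [xFun_invol]
    show false :: (if GLetter.d = tau y then (aPerm ^ cnt L) s else aFun ((aPerm ^ cnt L) s)) = _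
    have hc : cnt (y :: L) = (if y = GLetter.b then 0 else 1) + cnt L := rfl
    rw [hc]
    cases y
    · simp [tau, pow_add]
    · simp only [tau, pow_add, pow_one, reduceIte, Equiv.Perm.mul_apply]
      norm_num
      rfl
    · simp only [tau, pow_add, pow_one, reduceIte, Equiv.Perm.mul_apply]
      norm_num
      rfl

lemma fixNil (L : List GLetter) : ((L.map blk).prod) [] = [] := by
  induction L with
  | nil => rfl
  | cons y L ih =>
    rw [List.map_cons, List.prod_cons, Equiv.Perm.mul_apply, ih, blk_apply]
    rfl

lemma fixes (m : ℕ) : ∀ (u : List Bool), ¬ (List.replicate m true <+: u) →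
    (tmP m) ((tmP m) u) = u := by
  induction m with
  | zero => intro u hu; exact absurd (List.nil_prefix) hu
  | succ m ih =>
    intro u hu
    match u with
    | [] => rw [show tmP (m+1) = ((wrd (m+1)).map blk).prod from rfl, fixNil, fixNil]
    | false :: s =>
      have hh : tmP (m+1) = (((wrd m).flatMap fun y => [GLetter.d, tau y]).map blk).prod := rfl
      rw [hh, prodF, prodF, aPerm_sq_apply]
    | true :: s =>
      have hs : ¬ (List.replicate m true <+: s) := by
        intro h; exact hu (by rw [List.replicate_succ]; exact List.cons_prefix_cons.mpr ⟨rfl, h⟩)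
      have hh : tmP (m+1) = (((wrd m).flatMap fun y => [GLetter.d, tau y]).map blk).prod := rfl
      rw [hh, prodT, prodT]
      exact congrArg (true :: ·) (ih s hs)

lemma subtree (m : ℕ) (s : List Bool) :
    tmP m (List.replicate m true ++ s) = List.replicate m true ++ (tmP 0) s := by
  induction m with
  | zero => rfl
  | succ m ih =>
    have hh : tmP (m+1) = (((wrd m).flatMap fun y => [GLetter.d, tau y]).map blk).prod := rfl
    rw [List.replicate_succ, List.cons_append, hh, prodT]
    exact congrArg (true :: ·) ih

-- witness
lemma t0_witness : (tmP 0) ((tmP 0) [true, true, true]) ≠ [true, true, true] := by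
  rw [t0_eq]
  show ga (gb (ga (gb (ga (gb (ga (gb [true,true,true]))))))) ≠ _
  decide

-- word length material
lemma gb_mul_gc : gb * gc = gd := by
  apply Equiv.ext
  intro u
  show xFun grigω GLetter.b 0 (xFun grigω GLetter.c 0 u) = xFun grigω GLetter.d 0 u
  have key : ∀ (s : List Bool) (n : ℕ),
      xFun grigω GLetter.b n (xFun grigω GLetter.c n s) = xFun grigω GLetter.d n s := by
    intro s
    induction s with
    | nil => intro n; rfl
    | cons hd t ih =>
      intro n
      cases hd
      · cases h : grigω n <;> simp [xFun, h, aFun_invol t]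
      · show true :: xFun grigω GLetter.b (n+1) (xFun grigω GLetter.c (n+1) t) = _
        rw [ih]; rfl
  exact key u 0

def genL : GLetter → List (Equiv.Perm (List Bool))
  | GLetter.b => [gb]
  | GLetter.c => [gc]
  | GLetter.d => [gb, gc]

def blkL (y : GLetter) : List (Equiv.Perm (List Bool)) := [ga, gb, ga] ++ genL y

lemma blkL_prod (y : GLetter) : (blkL y).prod = blk y := by
  cases y <;>
    rw [blk] <;>
    simp only [blkL, genL, List.cons_append, List.nil_append, List.prod_cons,
      List.prod_nil, mul_one, mul_assoc]
  · rfl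
  · rfl
  · rw [gb_mul_gc]; rfl

lemma flat_prod (L : List GLetter) : ((L.flatMap blkL).prod) = (L.map blk).prod := by
  induction L with
  | nil => rfl
  | cons y L ih => rw [List.flatMap_cons, List.prod_append, blkL_prod, List.map_cons, List.prod_cons, ih]

lemma flat_len (L : List GLetter) : (L.flatMap blkL).length ≤ 5 * L.length := by
  induction L with
  | nil => simp
  | cons y L ih =>
    rw [List.flatMap_cons, List.length_append, List.length_cons]
    have : (blkL y).length ≤ 5 := by cases y <;> simp [blkL, genL]
    omega

lemma mem_blkL (y : GLetter) (g : Equiv.Perm (List Bool)) (hg : g ∈ blkL y) :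
    g ∈ ({ga, gb, gc} : Set (Equiv.Perm (List Bool))) := by
  cases y <;> simp [blkL, genL] at hg <;>
    simp only [Set.mem_insert_iff, Set.mem_singleton_iff] <;> tauto

lemma wrd_len (m : ℕ) : (wrd m).length = 2 ^ m := by
  induction m with
  | zero => rfl
  | succ m ih =>
    have aux : ∀ L : List GLetter,
        (L.flatMap fun y => [GLetter.d, tau y]).length = 2 * L.length := by
      intro L
      induction L with
      | nil => rfl
      | cons y L ih2 =>
        rw [List.flatMap_cons, List.length_append, ih2, List.length_cons]
        simp; omega
    rw [show wrd (m+1) = ((wrd m).flatMap fun y => [GLetter.d, tau y]) from rfl, aux, ih,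
      pow_succ]
    ring

lemma ofFn_cast {α β : Type*} (l : List α) (n : ℕ) (h : l.length = n) (f : α → β) :
    (List.ofFn fun i : Fin n => f (l.get (Fin.cast h.symm i))) = l.map f := by
  subst h
  rw [show (fun i : Fin l.length => f (l.get (Fin.cast rfl.symm i))) = f ∘ l.get from rfl,
    ← List.map_ofFn, List.ofFn_get]

/-- In the Grigorchuk group, `t₀ = abab` has `t₀² ≠ 1`, and for every `m` there is
`t_m = ∏_{i=1}^{2^m} (a b a x_i)` with `x_i ∈ {b,c,d}` such that `t_m²` is a
nontrivial element of `Rist(1^m) ∩ 𝔾`, `t_m` restricted to the subtree at `1^m`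
is `t₀`, and `t_m²` has word length at most `2^{m+4}` in the generators `(a,b,c)`. -/
theorem stmt19 :
    (ga * gb * ga * gb) ^ 2 ≠ 1 ∧
    ∀ m : ℕ, ∃ x : Fin (2 ^ m) → Equiv.Perm (List Bool),
      (∀ i, x i = gb ∨ x i = gc ∨ x i = gd) ∧
      ∃ tm : Equiv.Perm (List Bool),
        tm = (List.ofFn fun i : Fin (2 ^ m) => ga * gb * ga * x i).prod ∧
        tm ^ 2 ≠ 1 ∧
        (∀ u : List Bool, ¬ (List.replicate m true <+: u) → (tm ^ 2) u = u) ∧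
        (∀ s : List Bool,
          tm (List.replicate m true ++ s) =
            List.replicate m true ++ (ga * gb * ga * gb) s) ∧
        ∃ l : List (Equiv.Perm (List Bool)), l.length ≤ 2 ^ (m + 4) ∧
          (∀ g ∈ l, g ∈ ({ga, gb, gc} : Set (Equiv.Perm (List Bool)))) ∧
          l.prod = tm ^ 2 := by
  constructor
  · intro h
    apply t0_witness
    rw [t0_eq, ← Equiv.Perm.mul_apply, ← pow_two, h, Equiv.Perm.one_apply]
  · intro m
    refine ⟨fun i => xPerm grigω ((wrd m).get (Fin.cast (wrd_len m).symm i)) 0, ?_, ?_⟩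
    · intro i
      have key : ∀ y : GLetter,
          xPerm grigω y 0 = gb ∨ xPerm grigω y 0 = gc ∨ xPerm grigω y 0 = gd := by
        intro y
        cases y
        · exact Or.inl rfl
        · exact Or.inr (Or.inl rfl)
        · exact Or.inr (Or.inr rfl)
      exact key _
    · refine ⟨tmP m, ?_, ?_, ?_, ?_, ?_⟩
      · show tmP m =
          (List.ofFn fun i : Fin (2^m) => blk ((wrd m).get (Fin.cast (wrd_len m).symm i))).prod
        rw [ofFn_cast (wrd m) (2^m) (wrd_len m) blk]
        rfl
      · intro h
        apply t0_witness
        have key : tmP m (tmP m (List.replicate m true ++ [true,true,true]))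
            = List.replicate m true ++ (tmP 0) ((tmP 0) [true,true,true]) := by
          rw [subtree, subtree]
        have h1 : tmP m (tmP m (List.replicate m true ++ [true,true,true]))
            = List.replicate m true ++ [true,true,true] := by
          rw [← Equiv.Perm.mul_apply, ← pow_two, h, Equiv.Perm.one_apply]
        exact List.append_cancel_left (key.symm.trans h1)
      · intro u hu
        rw [pow_two, Equiv.Perm.mul_apply]
        exact fixes m u hu
      · intro s
        rw [subtree, t0_eq]
      · refine ⟨((wrd m).flatMap blkL) ++ ((wrd m).flatMap blkL), ?_, ?_, ?_⟩
        · rw [List.length_append]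
          have h5 := flat_len (wrd m)
          rw [wrd_len] at h5
          have hK : 2 ^ (m + 4) = 16 * 2 ^ m := by rw [pow_add]; ring
          rw [hK]
          linarith
        · intro g hg
          rw [List.mem_append] at hg
          rcases hg with hg | hg <;>
          · rw [List.mem_flatMap] at hg
            obtain ⟨y, _, hy⟩ := hg
            exact mem_blkL y g hy
        · rw [List.prod_append, flat_prod, pow_two]
          rfl
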